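/- Let A be an n×n complex matrix and λ a complex number. If there exist complex numbers c_1,...,c_n such that |a_{i,i} - c_i - λ| > Σ_{j≠i} |a_{i,j} - c_i| for all i ∈ [n], then rank(A - λI) ≥ n - 1. -/

import Mathlib

open Matrix Module

lemma matrix_rank_add_le {m : ℕ} (X Y : Matrix (Fin m) (Fin m) ℂ) :
    (X + Y).rank ≤ X.rank + Y.rank := by
  rw [Matrix.rank, Matrix.rank, Matrix.rank, Matrix.mulVecLin_add]
  have hsub : LinearMap.range (X.mulVecLin + Y.mulVecLin) ≤
      LinearMap.range X.mulVecLin ⊔ LinearMap.range Y.mulVecLin := by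
    rintro _ ⟨v, rfl⟩
    exact Submodule.add_mem_sup ⟨v, rfl⟩ ⟨v, rfl⟩
  exact le_trans (Submodule.finrank_mono hsub)
    (Submodule.finrank_add_le_finrank_add_finrank _ _)

lemma matrix_rank_row_const {m : ℕ} (d : Fin m → ℂ) :
    (Matrix.of fun i (_ : Fin m) => d i).rank ≤ 1 := by
  rw [Matrix.rank]
  have hsub : LinearMap.range (Matrix.of fun i (_ : Fin m) => d i).mulVecLin ≤
      Submodule.span ℂ {d} := by
    rintro _ ⟨v, rfl⟩
    refine Submodule.mem_span_singleton.mpr ⟨∑ j, v j, ?_⟩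
    ext i
    simp [Matrix.mulVecLin_apply, Matrix.mulVec, dotProduct, Finset.mul_sum, mul_comm]
  refine le_trans (Submodule.finrank_mono hsub) ?_
  simpa using finrank_span_le_card ({d} : Set (Fin m → ℂ))

theorem smaller_gershgorin_rank_bound (n : ℕ) (A : Matrix (Fin n) (Fin n) ℂ) (lam : ℂ)
    (c : Fin n → ℂ)
    (h : ∀ i : Fin n,
      ∑ j ∈ Finset.univ.erase i, ‖A i j - c i‖ <
        ‖A i i - c i - lam‖) :
    n - 1 ≤ (A - lam • (1 : Matrix (Fin n) (Fin n) ℂ)).rank := by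
  set M := A - lam • (1 : Matrix (Fin n) (Fin n) ℂ) with hM
  set C : Matrix (Fin n) (Fin n) ℂ := Matrix.of fun i _ => c i with hC
  set B : Matrix (Fin n) (Fin n) ℂ := M - C with hB
  have hdet : B.det ≠ 0 := by
    apply det_ne_zero_of_sum_row_lt_diag
    intro k
    have hk := h k
    have h1 : ∀ j ∈ Finset.univ.erase k, ‖B k j‖ = ‖A k j - c k‖ := by
      intro j hj
      have hjk : j ≠ k := (Finset.mem_erase.mp hj).1
      simp [hB, hM, hC, Matrix.one_apply, hjk.symm]
    have h2 : ‖B k k‖ = ‖A k k - c k - lam‖ := by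
      simp only [hB, hM, hC, Matrix.sub_apply, Matrix.smul_apply, Matrix.one_apply_eq,
        Matrix.of_apply, smul_eq_mul, mul_one]
      ring_nf
    rw [Finset.sum_congr rfl h1, h2]
    exact hk
  have hrankB : B.rank = n := by
    rw [Matrix.rank_of_isUnit B ((Matrix.isUnit_iff_isUnit_det B).mpr
      (isUnit_iff_ne_zero.mpr hdet))]
    simp
  have hrankC : (-C).rank ≤ 1 := by
    have : -C = Matrix.of fun i (_ : Fin n) => -c i := by ext i j; simp [hC]
    rw [this]
    exact matrix_rank_row_const _
  have key : B.rank ≤ M.rank + (-C).rank := by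
    have hBe : B = M + (-C) := by rw [hB, sub_eq_add_neg]
    rw [hBe]
    exact matrix_rank_add_le M (-C)
  omega
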